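/- Let T ∈ cv(F) with volume entropy h = h(T), and let μ_T be a Patterson-Sullivan current for T, so that there exist constants C₁ > C₂ > 0 with C₂·exp(−h·d_T(x,y)) ≤ μ_T(Cyl_{[x,y]}) ≤ C₁·exp(−h·d_T(x,y)) for all distinct vertices x,y of T. Then μ_T is tame and h_T(μ_T) = h(T). -/

import Mathlib

open Filter MeasureTheory Topology

/-- An abstract model of a point `T` of the unprojectivized Outer space `cv(F)` of a
free group `G = F`: an ℝ-tree `X` with a minimal free discrete isometric cocompact
(cobounded) action of `G`, together with the two-sided cylinder subsets of the double
boundary `B = ∂²F` (on which `G` acts by `bact`) determined by oriented geodesic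
segments `[x,y]` of the tree.  The condition
`dist a x + dist x y + dist y b = dist a b` expresses that `[x,y] ⊆ [a,b]` with
matching orientation. -/
structure CVTree (G : Type) [Group G] (B : Type) (bact : G → B → B) : Type 1 where
  X : Type
  nonempty : Nonempty X
  dist : X → X → ℝ
  dist_self : ∀ x, dist x x = 0
  dist_comm : ∀ x y, dist x y = dist y x
  dist_triangle : ∀ x y z, dist x z ≤ dist x y + dist y z
  eq_of_dist_eq_zero : ∀ x y, dist x y = 0 → x = y
  act : G → X → X
  act_one : ∀ x, act 1 x = x
  act_mul : ∀ g h x, act (g * h) x = act g (act h x)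
  act_isom : ∀ g x y, dist (act g x) (act g y) = dist x y
  act_free : ∀ g x, act g x = x → g = 1
  cobounded : ∃ x0 : X, ∃ R : ℝ, ∀ y : X, ∃ g : G, dist y (act g x0) ≤ R
  cyl : X → X → Set B
  cyl_mono : ∀ a x y b, dist a x + dist x y + dist y b = dist a b → cyl a b ⊆ cyl x y
  cyl_act : ∀ g x y, cyl (act g x) (act g y) = bact g '' cyl x y

namespace CVTree

variable {G B : Type} [Group G] [MeasurableSpace B] {bact : G → B → B}

/-- The mass `μ(Cyl_{[x,y]})` of the two-sided cylinder of the segment `[x,y]`. -/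
noncomputable def cylMass (T : CVTree G B bact) (μ : Measure B) (x y : T.X) : ℝ :=
  (μ (T.cyl x y)).toReal

/-- A geodesic current: a `G`-invariant measure on `∂²F = B`, finite on cylinders. -/
def IsCurrent (T : CVTree G B bact) (μ : Measure B) : Prop :=
  (∀ (g : G) (s : Set B), μ (bact g ⁻¹' s) = μ s) ∧ ∀ x y : T.X, μ (T.cyl x y) ≠ ⊤

/-- The geometric entropy `h_T(μ) = liminf_{d_T(x,y)→∞} (−log μ(Cyl_{[x,y]}))/d_T(x,y)`
(the liminf is taken over the cylinders of positive mass, the cylinders of zero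
mass contributing the value `+∞` which does not affect the liminf). -/
noncomputable def geomEntropy (T : CVTree G B bact) (μ : Measure B) : ℝ :=
  Filter.liminf
    (fun p : T.X × T.X => -Real.log (T.cylMass μ p.1 p.2) / T.dist p.1 p.2)
    ((Filter.comap (fun p : T.X × T.X => T.dist p.1 p.2) Filter.atTop) ⊓
      Filter.principal {p : T.X × T.X | μ (T.cyl p.1 p.2) ≠ 0})

/-- The translation length `‖g‖_T = inf_{x ∈ T} d_T(x, gx)`. -/
noncomputable def translationLength (T : CVTree G B bact) (g : G) : ℝ :=
  ⨅ x : T.X, T.dist x (T.act g x)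

/-- The volume entropy `h(T) = lim_{R→∞} log #{g : d_T(x₀,gx₀) ≤ R}/R`
(independent of the basepoint `x₀`). -/
def HasVolEntropy (T : CVTree G B bact) (h : ℝ) : Prop :=
  ∀ x0 : T.X,
    Filter.Tendsto
      (fun R : ℝ => Real.log (Nat.card {g : G // T.dist x0 (T.act g x0) ≤ R}) / R)
      Filter.atTop (nhds h)

/-- Tameness of a current with respect to the tree `T`. -/
def Tame (T : CVTree G B bact) (μ : Measure B) : Prop :=
  ∀ M : ℝ, 1 ≤ M → ∃ C : ℝ, 1 ≤ C ∧ ∀ a₁ b₁ a₂ b₂ : T.X,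
    T.dist a₁ a₂ ≤ M → T.dist b₁ b₂ ≤ M → a₁ ≠ b₁ → a₂ ≠ b₂ →
    (1 / C) * T.cylMass μ a₂ b₂ ≤ T.cylMass μ a₁ b₁ ∧
      T.cylMass μ a₁ b₁ ≤ C * T.cylMass μ a₂ b₂

/-- A Patterson–Sullivan current for `T` with volume entropy `h`: a current whose
cylinder masses satisfy the two-sided exponential estimate
`C₂ e^{−h d_T(x,y)} ≤ μ(Cyl_{[x,y]}) ≤ C₁ e^{−h d_T(x,y)}`. -/
def IsPattersonSullivan (T : CVTree G B bact) (μ : Measure B) (h : ℝ) : Prop :=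
  T.IsCurrent μ ∧ ∃ C₁ C₂ : ℝ, 0 < C₂ ∧ C₂ < C₁ ∧ ∀ x y : T.X, x ≠ y →
    C₂ * Real.exp (-h * T.dist x y) ≤ T.cylMass μ x y ∧
      T.cylMass μ x y ≤ C₁ * Real.exp (-h * T.dist x y)

/-- An `F`-equivariant quasi-isometry between two trees in `cv(F)`. -/
def IsEquivariantQI (T T' : CVTree G B bact) (φ : T.X → T'.X) : Prop :=
  (∀ (g : G) (x : T.X), φ (T.act g x) = T'.act g (φ x)) ∧
  ∃ L : ℝ, 1 ≤ L ∧
    (∀ x y : T.X, (1 / L) * T.dist x y - L ≤ T'.dist (φ x) (φ y) ∧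
      T'.dist (φ x) (φ y) ≤ L * T.dist x y + L) ∧
    ∀ y : T'.X, ∃ x : T.X, T'.dist (φ x) y ≤ L

end CVTree


section Aux

open CVTree

variable {G B : Type} [Group G] [MeasurableSpace B] {bact : G → B → B}

lemma CVTree.dist_nonneg' (T : CVTree G B bact) (x y : T.X) : 0 ≤ T.dist x y := by
  have h1 := T.dist_triangle x y x
  have h2 := T.dist_self x
  have h3 := T.dist_comm y x
  linarith

lemma CVTree.ne_of_dist_pos (T : CVTree G B bact) {x y : T.X} (hd : 0 < T.dist x y) :
    x ≠ y := by
  intro he; subst he; rw [T.dist_self] at hd; exact lt_irrefl _ hd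

/-- Tameness from the Patterson–Sullivan estimates. -/
lemma tame_of_PS {G B : Type} [Group G] [MeasurableSpace B] {bact : G → B → B}
    (T : CVTree G B bact) (μ : Measure B) (h : ℝ)
    (hPS : T.IsPattersonSullivan μ h) : T.Tame μ := by
  obtain ⟨-, C₁, C₂, hC₂, hC₁₂, hbd⟩ := hPS
  have hC₁ : 0 < C₁ := lt_trans hC₂ hC₁₂
  intro M hM
  refine ⟨(C₁ / C₂) * Real.exp (2 * M * |h|), ?_, ?_⟩
  · have h1 : (1:ℝ) ≤ C₁ / C₂ := le_of_lt ((one_lt_div hC₂).mpr hC₁₂)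
    have h2 : (1:ℝ) ≤ Real.exp (2 * M * |h|) :=
      Real.one_le_exp (by positivity)
    nlinarith
  · intro a₁ b₁ a₂ b₂ ha hb hne₁ hne₂
    set K : ℝ := (C₁ / C₂) * Real.exp (2 * M * |h|) with hK
    have hKpos : 0 < K := by positivity
    -- distances are within 2M of each other
    have key : ∀ a₁ b₁ a₂ b₂ : T.X, T.dist a₁ a₂ ≤ M → T.dist b₁ b₂ ≤ M →
        a₁ ≠ b₁ → a₂ ≠ b₂ → T.cylMass μ a₁ b₁ ≤ K * T.cylMass μ a₂ b₂ := by
      intro a₁ b₁ a₂ b₂ ha hb hne₁ hne₂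
      have hd : T.dist a₁ b₁ ≤ T.dist a₂ b₂ + 2 * M := by
        have t1 := T.dist_triangle a₁ a₂ b₁
        have t2 := T.dist_triangle a₂ b₂ b₁
        have t3 := T.dist_comm b₂ b₁
        linarith
      obtain ⟨l1, u1⟩ := hbd a₁ b₁ hne₁
      obtain ⟨l2, u2⟩ := hbd a₂ b₂ hne₂
      have hexp : Real.exp (-h * T.dist a₁ b₁) ≤
          Real.exp (2 * M * |h|) * Real.exp (-h * T.dist a₂ b₂) := by
        rw [← Real.exp_add]
        apply Real.exp_le_exp.mpr
        have habs : -h * T.dist a₁ b₁ - (-h * T.dist a₂ b₂)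
            = h * (T.dist a₂ b₂ - T.dist a₁ b₁) := by ring
        have h1 : h * (T.dist a₂ b₂ - T.dist a₁ b₁) ≤ |h| * |T.dist a₂ b₂ - T.dist a₁ b₁| := by
          calc h * (T.dist a₂ b₂ - T.dist a₁ b₁) ≤ |h * (T.dist a₂ b₂ - T.dist a₁ b₁)| :=
                le_abs_self _
            _ = |h| * |T.dist a₂ b₂ - T.dist a₁ b₁| := abs_mul _ _
        have hd2 : T.dist a₂ b₂ ≤ T.dist a₁ b₁ + 2 * M := by
          have t1 := T.dist_triangle a₂ a₁ b₂
          have t2 := T.dist_triangle a₁ b₁ b₂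
          have t3 := T.dist_comm a₁ a₂
          have t4 := T.dist_comm b₁ b₂
          linarith
        have habs2 : |T.dist a₂ b₂ - T.dist a₁ b₁| ≤ 2 * M := by
          rw [abs_le]; constructor <;> linarith
        have h2 : |h| * |T.dist a₂ b₂ - T.dist a₁ b₁| ≤ |h| * (2 * M) := by
          apply mul_le_mul_of_nonneg_left habs2 (abs_nonneg h)
        linarith
      calc T.cylMass μ a₁ b₁ ≤ C₁ * Real.exp (-h * T.dist a₁ b₁) := u1
        _ ≤ C₁ * (Real.exp (2 * M * |h|) * Real.exp (-h * T.dist a₂ b₂)) := by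
            apply mul_le_mul_of_nonneg_left hexp (le_of_lt hC₁)
        _ = K * (C₂ * Real.exp (-h * T.dist a₂ b₂)) := by
            rw [hK]; field_simp
        _ ≤ K * T.cylMass μ a₂ b₂ := mul_le_mul_of_nonneg_left l2 (le_of_lt hKpos)
    constructor
    · have := key a₂ b₂ a₁ b₁ (by rwa [T.dist_comm]) (by rwa [T.dist_comm]) hne₂ hne₁
      rw [one_div, inv_mul_le_iff₀ hKpos]
      exact this
    · exact key a₁ b₁ a₂ b₂ ha hb hne₁ hne₂

end Aux

/-- A Patterson–Sullivan current `μ_T` for `T ∈ cv(F)` (i.e. a current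
whose cylinder masses satisfy the two-sided estimate
`C₂ e^{−h d_T(x,y)} ≤ μ_T(Cyl_{[x,y]}) ≤ C₁ e^{−h d_T(x,y)}` where `h = h(T)` is the
volume entropy) is tame, and `h_T(μ_T) = h(T)`. -/
theorem pattersonSullivan_tame_and_entropy {G B : Type} [Group G] [MeasurableSpace B]
    {bact : G → B → B} (k : ℕ) (hk : 2 ≤ k) (iso : G ≃* FreeGroup (Fin k))
    (T : CVTree G B bact) (μ : Measure B) (h : ℝ)
    (hvol : T.HasVolEntropy h) (hPS : T.IsPattersonSullivan μ h) :
    T.Tame μ ∧ T.geomEntropy μ = h := by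
  refine ⟨tame_of_PS T μ h hPS, ?_⟩
  obtain ⟨⟨hinv, hfin⟩, C₁, C₂, hC₂, hC₁₂, hbd⟩ := hPS
  have hC₁ : 0 < C₁ := lt_trans hC₂ hC₁₂
  -- positivity of masses at distinct points, and nonvanishing of cylinder measures
  have hmass : ∀ x y : T.X, x ≠ y → 0 < T.cylMass μ x y := fun x y hxy =>
    lt_of_lt_of_le (by positivity) (hbd x y hxy).1
  have hne0 : ∀ x y : T.X, x ≠ y → μ (T.cyl x y) ≠ 0 := by
    intro x y hxy hz
    have := hmass x y hxy
    rw [CVTree.cylMass, hz] at this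
    simp at this
  set F₀ : Filter (T.X × T.X) :=
    (Filter.comap (fun p : T.X × T.X => T.dist p.1 p.2) Filter.atTop) ⊓
      Filter.principal {p : T.X × T.X | μ (T.cyl p.1 p.2) ≠ 0} with hF₀
  by_cases hub : ∀ R : ℝ, ∃ p : T.X × T.X, R ≤ T.dist p.1 p.2
  · -- unbounded case : the filter is nontrivial and the quotient converges to h
    haveI hNB : F₀.NeBot := by
      rw [hF₀, Filter.inf_principal_neBot_iff]
      intro U hU
      obtain ⟨t, ht, hsub⟩ := Filter.mem_comap.mp hU
      obtain ⟨R, hR⟩ := Filter.mem_atTop_sets.mp ht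
      obtain ⟨p, hp⟩ := hub (max R 1)
      have hd1 : (1:ℝ) ≤ T.dist p.1 p.2 := le_trans (le_max_right _ _) hp
      have hne : p.1 ≠ p.2 := T.ne_of_dist_pos (lt_of_lt_of_le zero_lt_one hd1)
      exact ⟨p, hsub (hR _ (le_trans (le_max_left _ _) hp)), hne0 _ _ hne⟩
    have hdT : Filter.Tendsto (fun p : T.X × T.X => T.dist p.1 p.2) F₀ Filter.atTop :=
      Filter.tendsto_comap.mono_left inf_le_left
    have hev1 : ∀ᶠ p : T.X × T.X in F₀, (1:ℝ) ≤ T.dist p.1 p.2 :=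
      hdT.eventually (Filter.eventually_ge_atTop 1)
    have hlow : Filter.Tendsto
        (fun p : T.X × T.X => h - Real.log C₁ / T.dist p.1 p.2) F₀ (nhds h) := by
      have := (tendsto_const_nhds (x := Real.log C₁) (f := F₀)).div_atTop hdT
      have := (tendsto_const_nhds (x := h) (f := F₀)).sub this
      simpa using this
    have hhigh : Filter.Tendsto
        (fun p : T.X × T.X => h - Real.log C₂ / T.dist p.1 p.2) F₀ (nhds h) := by
      have := (tendsto_const_nhds (x := Real.log C₂) (f := F₀)).div_atTop hdT
      have := (tendsto_const_nhds (x := h) (f := F₀)).sub this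
      simpa using this
    have hfT : Filter.Tendsto
        (fun p : T.X × T.X => -Real.log (T.cylMass μ p.1 p.2) / T.dist p.1 p.2)
        F₀ (nhds h) := by
      apply tendsto_of_tendsto_of_tendsto_of_le_of_le' hlow hhigh
      · filter_upwards [hev1] with p hp
        have hdpos : (0:ℝ) < T.dist p.1 p.2 := lt_of_lt_of_le zero_lt_one hp
        have hne : p.1 ≠ p.2 := T.ne_of_dist_pos hdpos
        obtain ⟨l, u⟩ := hbd p.1 p.2 hne
        have hm : 0 < T.cylMass μ p.1 p.2 := hmass _ _ hne
        have hlog : Real.log (T.cylMass μ p.1 p.2)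
            ≤ Real.log C₁ + (-h * T.dist p.1 p.2) := by
          calc Real.log (T.cylMass μ p.1 p.2)
              ≤ Real.log (C₁ * Real.exp (-h * T.dist p.1 p.2)) := Real.log_le_log hm u
            _ = Real.log C₁ + (-h * T.dist p.1 p.2) := by
                rw [Real.log_mul (ne_of_gt hC₁) (Real.exp_ne_zero _), Real.log_exp]
        have : (h * T.dist p.1 p.2 - Real.log C₁) / T.dist p.1 p.2
            ≤ -Real.log (T.cylMass μ p.1 p.2) / T.dist p.1 p.2 :=
          (div_le_div_iff_of_pos_right hdpos).mpr (by linarith)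
        calc h - Real.log C₁ / T.dist p.1 p.2
            = (h * T.dist p.1 p.2 - Real.log C₁) / T.dist p.1 p.2 := by
              field_simp
          _ ≤ _ := this
      · filter_upwards [hev1] with p hp
        have hdpos : (0:ℝ) < T.dist p.1 p.2 := lt_of_lt_of_le zero_lt_one hp
        have hne : p.1 ≠ p.2 := T.ne_of_dist_pos hdpos
        obtain ⟨l, u⟩ := hbd p.1 p.2 hne
        have hm : 0 < T.cylMass μ p.1 p.2 := hmass _ _ hne
        have hlog : Real.log C₂ + (-h * T.dist p.1 p.2)
            ≤ Real.log (T.cylMass μ p.1 p.2) := by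
          calc Real.log C₂ + (-h * T.dist p.1 p.2)
              = Real.log (C₂ * Real.exp (-h * T.dist p.1 p.2)) := by
                rw [Real.log_mul (ne_of_gt hC₂) (Real.exp_ne_zero _), Real.log_exp]
            _ ≤ Real.log (T.cylMass μ p.1 p.2) := Real.log_le_log (by positivity) l
        have : -Real.log (T.cylMass μ p.1 p.2) / T.dist p.1 p.2
            ≤ (h * T.dist p.1 p.2 - Real.log C₂) / T.dist p.1 p.2 :=
          (div_le_div_iff_of_pos_right hdpos).mpr (by linarith)
        calc -Real.log (T.cylMass μ p.1 p.2) / T.dist p.1 p.2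
            ≤ (h * T.dist p.1 p.2 - Real.log C₂) / T.dist p.1 p.2 := this
          _ = h - Real.log C₂ / T.dist p.1 p.2 := by field_simp
    exact hfT.liminf_eq
  · -- bounded case : all distances are bounded, so h = 0 and the filter is trivial
    push_neg at hub
    obtain ⟨D, hD⟩ := hub
    -- the group is infinite
    haveI : Nonempty (Fin k) := ⟨⟨0, by omega⟩⟩
    haveI hGinf : Infinite G := Infinite.of_injective iso.symm iso.symm.injective
    obtain ⟨x0⟩ := T.nonempty
    -- h = 0 via the volume entropy
    have hzero : h = 0 := by
      have hev : (fun R : ℝ =>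
          Real.log (Nat.card {g : G // T.dist x0 (T.act g x0) ≤ R}) / R)
          =ᶠ[Filter.atTop] fun _ => (0:ℝ) := by
        filter_upwards [Filter.eventually_ge_atTop D] with R hR
        haveI : Infinite {g : G // T.dist x0 (T.act g x0) ≤ R} :=
          Infinite.of_injective (fun g : G => ⟨g, le_trans (le_of_lt (hD (x0, T.act g x0))) hR⟩)
            (fun a b hab => congrArg Subtype.val hab)
        rw [Nat.card_eq_zero_of_infinite]
        simp
      have h1 : Filter.Tendsto (fun R : ℝ =>
          Real.log (Nat.card {g : G // T.dist x0 (T.act g x0) ≤ R}) / R)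
          Filter.atTop (nhds 0) := Filter.Tendsto.congr' hev.symm tendsto_const_nhds
      exact tendsto_nhds_unique (hvol x0) h1
    -- the filter is ⊥
    have hcb : (Filter.comap (fun p : T.X × T.X => T.dist p.1 p.2) Filter.atTop
        : Filter (T.X × T.X)) = ⊥ := by
      rw [← Filter.empty_mem_iff_bot]
      refine Filter.mem_comap.mpr ⟨Set.Ici D, Filter.Ici_mem_atTop D, ?_⟩
      intro p hp
      exact absurd (hD p) (not_lt.mpr hp)
    rw [CVTree.geomEntropy, hcb, bot_inf_eq, hzero, Filter.liminf_eq]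
    have : {a : ℝ | ∀ᶠ p : T.X × T.X in ⊥,
        a ≤ -Real.log (T.cylMass μ p.1 p.2) / T.dist p.1 p.2} = Set.univ := by
      ext a; simp
    rw [this]
    exact Real.sSup_univ
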